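/- arXiv:2408.14440 — 2 statements merged into one kernel-verified Lean document; each statement's English description precedes it below -/
import Mathlib

section
/- Suppose: (1) f is lower semicontinuous and nonnegative; (2) g is upper semicontinuous with inf_{ℝ^d} g ≤ 0; (3) for every s ≥ 0 there exists a nonempty compact set C_s such that inf { f(x) : s ≤ g(x) } = inf { f(x) : x ∈ {y : s ≤ g(y)} ∩ C_s }; (4) the zero set {x : f(x) = 0} is nonempty and contained in {x : g(x) = 0}. Then α_inf(0) = 0 and α_inf(s) > 0 for all s > 0. -/
theorem stmt_9 {d : ℕ} (f g : EuclideanSpace ℝ (Fin d) → ℝ)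
    (hf : LowerSemicontinuous f) (hfpos : ∀ x, 0 ≤ f x)
    (hg : UpperSemicontinuous g) (hginf : (⨅ x, (g x : EReal)) ≤ 0)
    (hC : ∀ s : ℝ, 0 ≤ s → ∃ C : Set (EuclideanSpace ℝ (Fin d)),
      C.Nonempty ∧ IsCompact C ∧
      (⨅ x ∈ {x | s ≤ g x}, (f x : EReal)) = ⨅ x ∈ {x | s ≤ g x} ∩ C, (f x : EReal))
    (hzero : {x | f x = 0}.Nonempty ∧ {x | f x = 0} ⊆ {x | g x = 0}) :
    (⨅ x ∈ {x | (0 : ℝ) ≤ g x}, (f x : EReal)) = 0 ∧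
      ∀ s : ℝ, 0 < s → 0 < ⨅ x ∈ {x | s ≤ g x}, (f x : EReal) := by
  obtain ⟨⟨x₀, hx₀⟩, hsub⟩ := hzero
  have hg0 : g x₀ = 0 := hsub hx₀
  constructor
  · apply le_antisymm
    · have h1 : (⨅ x ∈ {x | (0 : ℝ) ≤ g x}, (f x : EReal)) ≤ (f x₀ : EReal) :=
        biInf_le _ (by simp [Set.mem_setOf_eq, hg0])
      have : f x₀ = 0 := hx₀
      rw [this] at h1
      simpa using h1
    · exact le_iInf₂ fun x _ => by exact_mod_cast hfpos x
  · intro s hs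
    obtain ⟨C, hCne, hCcomp, hCeq⟩ := hC s hs.le
    rw [hCeq]
    set K := {x | s ≤ g x} ∩ C with hK
    have hKc : IsCompact K := hCcomp.inter_left (hg.isClosed_preimage s)
    have key : ∃ ε : ℝ, 0 < ε ∧ ∀ x ∈ K, ε ≤ f x := by
      by_contra hcon
      push_neg at hcon
      set t : ℕ → Set (EuclideanSpace ℝ (Fin d)) :=
        fun n => K ∩ {x | f x ≤ 1 / (n + 1)} with ht
      have htn : ∀ n, (t n).Nonempty := by
        intro n
        obtain ⟨x, hxK, hxf⟩ := hcon (1 / (n + 1)) (by positivity)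
        exact ⟨x, hxK, hxf.le⟩
      have htcl : ∀ n, IsClosed (t n) := fun n =>
        ((hg.isClosed_preimage s).inter hCcomp.isClosed).inter
          (hf.isClosed_preimage (1 / (n + 1)))
      have htc : ∀ n, IsCompact (t n) :=
        fun n => hKc.inter_right (hf.isClosed_preimage (1 / (n + 1)))
      have hmono : ∀ m n : ℕ, m ≤ n → t n ⊆ t m := by
        intro m n hmn x hx
        refine ⟨hx.1, ?_⟩
        show f x ≤ 1 / (m + 1)
        refine le_trans hx.2 ?_
        apply one_div_le_one_div_of_le (by positivity)
        have : (m : ℝ) ≤ n := Nat.cast_le.2 hmn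
        linarith
      have htd : Directed (· ⊇ ·) t := fun m n =>
        ⟨max m n, hmono m _ (le_max_left m n), hmono n _ (le_max_right m n)⟩
      obtain ⟨x, hx⟩ :=
        IsCompact.nonempty_iInter_of_directed_nonempty_isCompact_isClosed t htd htn htc htcl
      simp only [Set.mem_iInter] at hx
      have hxK : x ∈ K := (hx 0).1
      have hfx : f x ≤ 0 := by
        refine le_of_forall_pos_le_add fun ε hε => ?_
        obtain ⟨n, hn⟩ := exists_nat_one_div_lt hε
        have := (hx n).2
        simp only [Set.mem_setOf_eq] at this
        linarith
      have hfx0 : f x = 0 := le_antisymm hfx (hfpos x)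
      have : g x = 0 := hsub hfx0
      have : s ≤ g x := hxK.1
      linarith
    obtain ⟨ε, hε, hεf⟩ := key
    calc (0 : EReal) < (ε : EReal) := by exact_mod_cast hε
      _ ≤ ⨅ x ∈ K, (f x : EReal) := le_iInf₂ fun x hx => by exact_mod_cast hεf x hx
end

section
/- Let g : ℝ^d → ℝ be upper semicontinuous such that either sup_{ℝ^d} g = +∞ or the supremum of g is attained. Suppose f : ℝ^d → ℝ is lower semicontinuous and there is a compact-valued set-valued map C : ℝ → 𝒫(ℝ^d) such that for all s > inf_{ℝ^d} g and all real t with s ≤ t ≤ sup_{ℝ^d} g, one has inf { f(x) : s ≤ g(x) } = inf { f(x) : x ∈ {y : s ≤ g(y)} ∩ C(t) }. Then α_inf(s) = inf { f(x) : s ≤ g(x) } is lower semicontinuous on ℝ (as an extended-real-valued function, with inf over the empty set equal to +∞). -/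
theorem stmt_18 {d : ℕ} (f g : EuclideanSpace ℝ (Fin d) → ℝ)
    (hg : UpperSemicontinuous g)
    (hgsup : (⨆ x, (g x : EReal)) = ⊤ ∨ ∃ x, ∀ y, g y ≤ g x)
    (hf : LowerSemicontinuous f)
    (C : ℝ → Set (EuclideanSpace ℝ (Fin d))) (hC : ∀ t, IsCompact (C t))
    (hCeq : ∀ s t : ℝ, (⨅ x, (g x : EReal)) < (s : EReal) → s ≤ t →
      (t : EReal) ≤ (⨆ x, (g x : EReal)) →
      (⨅ x ∈ {x | s ≤ g x}, (f x : EReal)) =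
        ⨅ x ∈ {y | s ≤ g y} ∩ C t, (f x : EReal)) :
    LowerSemicontinuous (fun s : ℝ => ⨅ x ∈ {x | s ≤ g x}, (f x : EReal)) := by
  set α : ℝ → EReal := fun s : ℝ => ⨅ x ∈ {x | s ≤ g x}, (f x : EReal)
  have hαdef : ∀ t : ℝ, α t = ⨅ x ∈ {x | t ≤ g x}, (f x : EReal) := fun _ => rfl
  have mono : Monotone α := by
    intro a b hab
    exact le_iInf₂ fun x hx => iInf₂_le x (hab.trans hx)
  intro s y hy
  suffices h : ∃ t₀ < s, y < α t₀ by
    obtain ⟨t₀, ht₀, hyt⟩ := h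
    filter_upwards [Ioi_mem_nhds ht₀] with t ht
    exact hyt.trans_le (mono ht.le)
  by_cases hI : (s : EReal) ≤ ⨅ x, (g x : EReal)
  · refine ⟨s - 1, by linarith, ?_⟩
    have huniv : ∀ t : ℝ, (t : EReal) ≤ ⨅ x, (g x : EReal) →
        {x | t ≤ g x} = Set.univ := by
      intro t ht
      ext x
      simp only [Set.mem_setOf_eq, Set.mem_univ, iff_true]
      exact_mod_cast ht.trans (iInf_le _ x)
    have h1 : α (s - 1) = α s := by
      rw [hαdef, hαdef, huniv s hI,
        huniv (s - 1) (le_trans (by exact_mod_cast by linarith) hI)]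
    rw [h1]
    exact hy
  push_neg at hI
  by_cases hS : (s : EReal) ≤ ⨆ x, (g x : EReal)
  · -- main case: compactness argument
    obtain ⟨ℓE, hℓ1, hℓ2⟩ := exists_between hI
    lift ℓE to ℝ using ⟨(hℓ2.trans (EReal.coe_lt_top s)).ne, (bot_le.trans_lt hℓ1).ne'⟩
      with ℓ hℓeq
    obtain ⟨y', hy1, hy2⟩ := exists_between hy
    lift y' to ℝ using ⟨(hy2.trans_le le_top).ne, (bot_le.trans_lt hy1).ne'⟩ with yr hyr
    by_contra hcon
    push_neg at hcon
    have hℓs : ℓ < s := EReal.coe_lt_coe_iff.1 hℓ2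
    set sn : ℕ → ℝ := fun n => s - (s - ℓ) / (n + 1) with hsn
    have hsnub : ∀ n, ℓ ≤ sn n ∧ sn n < s := by
      intro n
      constructor
      · have h1 : (s - ℓ) / (n + 1) ≤ s - ℓ := by
          apply div_le_self (by linarith)
          have : (0:ℝ) ≤ (n:ℝ) := n.cast_nonneg
          linarith
        simp only [hsn]; linarith
      · have h2 : 0 < (s - ℓ) / (n + 1) := by
          apply div_pos (by linarith)
          have : (0:ℝ) ≤ (n:ℝ) := n.cast_nonneg
          linarith
        simp only [hsn]; linarith
    have hsnmono : ∀ n, sn n ≤ sn (n + 1) := by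
      intro n
      have h3 : (s - ℓ) / (n + 1 + 1) ≤ (s - ℓ) / (n + 1) := by
        apply div_le_div_of_nonneg_left (by linarith) (by positivity) (by linarith)
      simp only [hsn]
      push_cast
      linarith
    have hsnI : ∀ n, (⨅ x, (g x : EReal)) < (sn n : EReal) := by
      intro n
      refine hℓ1.trans_le ?_
      exact_mod_cast (hsnub n).1
    set F : ℕ → Set (EuclideanSpace ℝ (Fin d)) :=
      fun n => C s ∩ ({x | sn n ≤ g x} ∩ {x | f x ≤ yr}) with hF
    have hgclosed : ∀ c : ℝ, IsClosed {x | c ≤ g x} := by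
      intro c
      have : {x | c ≤ g x} = (g ⁻¹' Set.Iio c)ᶜ := by
        ext x; simp [not_lt]
      rw [this]
      exact (upperSemicontinuous_iff_isOpen_preimage.1 hg c).isClosed_compl
    have hFclosed : ∀ n, IsClosed (F n) :=
      fun n => (hC s).isClosed.inter ((hgclosed (sn n)).inter (hf.isClosed_preimage yr))
    have hFnonempty : ∀ n, (F n).Nonempty := by
      intro n
      have hlt : (⨅ x ∈ {x | sn n ≤ g x}, (f x : EReal)) ≤ y := hcon (sn n) (hsnub n).2
      rw [hCeq (sn n) s (hsnI n) (hsnub n).2.le hS] at hlt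
      have : (⨅ x ∈ {y | sn n ≤ g y} ∩ C s, (f x : EReal)) < (yr : EReal) :=
        hlt.trans_lt hy1
      rw [iInf_lt_iff] at this
      obtain ⟨x, hx⟩ := this
      rw [iInf_lt_iff] at hx
      obtain ⟨hxmem, hxlt⟩ := hx
      exact ⟨x, hxmem.2, hxmem.1, by exact_mod_cast hxlt.le⟩
    have hFdec : ∀ n, F (n + 1) ⊆ F n := by
      intro n x hx
      exact ⟨hx.1, (hsnmono n).trans hx.2.1, hx.2.2⟩
    have hinter : (⋂ n, F n).Nonempty := by
      apply IsCompact.nonempty_iInter_of_sequence_nonempty_isCompact_isClosed F hFdec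
        hFnonempty ((hC s).inter_right ((hgclosed (sn 0)).inter (hf.isClosed_preimage yr)))
        hFclosed
    obtain ⟨x, hx⟩ := hinter
    simp only [Set.mem_iInter, hF, Set.mem_inter_iff, Set.mem_setOf_eq] at hx
    have hgx : s ≤ g x := by
      have htend : Filter.Tendsto sn Filter.atTop (nhds s) := by
        have h0 : Filter.Tendsto (fun n : ℕ => (s - ℓ) * (1 / (n + 1))) Filter.atTop
            (nhds ((s - ℓ) * 0)) :=
          Filter.Tendsto.const_mul _ tendsto_one_div_add_atTop_nhds_zero_nat
        have h5 := Filter.Tendsto.const_sub s h0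
        simp only [mul_zero, sub_zero] at h5
        convert h5 using 2 with n
        simp only [hsn]; ring
      exact le_of_tendsto htend (Filter.Eventually.of_forall fun n => (hx n).2.1)
    have h1 : α s ≤ (f x : EReal) := iInf₂_le x hgx
    have h2 : (f x : EReal) ≤ (yr : EReal) := by exact_mod_cast (hx 0).2.2
    exact absurd (h1.trans h2) (not_le.2 hy2)
  · push_neg at hS
    obtain ⟨zE, hz1, hz2⟩ := exists_between hS
    have hgne : (⨆ x, (g x : EReal)) ≠ ⊥ := by
      have h6 : (g 0 : EReal) ≤ ⨆ x, (g x : EReal) :=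
        le_iSup (fun x => (g x : EReal)) (0 : EuclideanSpace ℝ (Fin d))
      exact fun h => by simp [h] at h6
    lift zE to ℝ using ⟨(hz2.trans (EReal.coe_lt_top s)).ne,
      fun h => hgne (le_bot_iff.1 (h ▸ hz1.le))⟩ with z hzeq
    refine ⟨z, EReal.coe_lt_coe_iff.1 hz2, ?_⟩
    have hempty : {x | z ≤ g x} = ∅ := by
      ext x
      simp only [Set.mem_setOf_eq, Set.mem_empty_iff_false, iff_false, not_le]
      exact_mod_cast (le_iSup (fun x => (g x : EReal)) x).trans_lt hz1
    have htop : α z = ⊤ := by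
      show (⨅ x ∈ {x | z ≤ g x}, (f x : EReal)) = ⊤
      rw [hempty]
      simp
    rw [htop]
    exact hy.trans_le le_top
end
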